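/- arXiv:2405.16611 — 2 statements merged into one kernel-verified Lean document; each statement's English description precedes it below -/
import Mathlib

section
/- Let 𝓘 be an implementation of an object O and suppose π0·π1 ∈ traces(𝓘) and π0·π2 ∈ traces(𝓘) for event sequences π0, π1, π2 such that π0|_obj is a complete history of O and procs(π1) ∩ procs(π2) = ∅. Then π0·π ∈ traces(𝓘) for every π ∈ π1 ⧢ π2. -/
set_option autoImplicit false

namespace WMM

universe u v

/-! ### Memory actions and events -/

inductive MemAct (Var Val : Type) : Type where
  | write (x : Var) (v : Val)
  | read (x : Var) (v : Val)
  | rmw (x : Var) (vold vnew : Val)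
  | fence

structure MemEv (Proc Var Val : Type) : Type where
  proc : Proc
  act : MemAct Var Val

section Mem

variable {Proc Var Val : Type}

def MemEv.isWrite (e : MemEv Proc Var Val) : Prop := ∃ x v, e.act = MemAct.write x v
def MemEv.isRead (e : MemEv Proc Var Val) : Prop := ∃ x v, e.act = MemAct.read x v
def MemEv.isRMW (e : MemEv Proc Var Val) : Prop := ∃ x v w, e.act = MemAct.rmw x v w
def MemEv.isFence (e : MemEv Proc Var Val) : Prop := e.act = MemAct.fence

/-- The set of processes appearing in an observable memory sequence. -/
def memProcs (σ : List (MemEv Proc Var Val)) : Set Proc := {p | ∃ e ∈ σ, MemEv.proc e = p}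

end Mem

/-! ### Shuffles -/

/-- `Shuffle s1 s2 s` means `s` is an interleaving of `s1` and `s2`. -/
inductive Shuffle {α : Type u} : List α → List α → List α → Prop where
  | nil : Shuffle [] [] []
  | left {s1 s2 s : List α} (x : α) : Shuffle s1 s2 s → Shuffle (s1 ++ [x]) s2 (s ++ [x])
  | right {s1 s2 s : List α} (x : α) : Shuffle s1 s2 s → Shuffle s1 (s2 ++ [x]) (s ++ [x])

/-! ### Paths of a labeled transition relation -/

inductive LTSPath {S : Type u} {L : Type v} (step : S → L → S → Prop) : S → List L → S → Prop where
  | nil (s : S) : LTSPath step s [] s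
  | cons {s s' s'' : S} {l : L} {ls : List L} :
      step s l s' → LTSPath step s' ls s'' → LTSPath step s (l :: ls) s''

/-! ### Memory models -/

/-- A memory model: an LTS whose labels are memory events or the silent label `τ = none`. -/
structure MemModel (Proc Var Val : Type) : Type 1 where
  State : Type
  init : State
  step : State → Option (MemEv Proc Var Val) → State → Prop

section MemModel

variable {Proc Var Val : Type}

/-- A state is stable if no silent (`τ`) transition is enabled. -/
def MemModel.Stable (M : MemModel Proc Var Val) (q : M.State) : Prop :=
  ∀ q', ¬ M.step q none q'

/-- Observable memory sequences from a state: traces with `τ` steps erased. -/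
def MemModel.OTraces (M : MemModel Proc Var Val) (q : M.State) :
    Set (List (MemEv Proc Var Val)) :=
  {σ | ∃ (π : List (Option (MemEv Proc Var Val))) (q' : M.State),
      LTSPath M.step q π q' ∧ π.reduceOption = σ}

def WeaklyMergeable (M : MemModel Proc Var Val) (σ1 σ2 : List (MemEv Proc Var Val)) : Prop :=
  ∀ q0 : M.State, M.Stable q0 → σ1 ∈ M.OTraces q0 → σ2 ∈ M.OTraces q0 →
    ∃ σ, Shuffle σ1 σ2 σ ∧ σ ∈ M.OTraces q0

def StronglyMergeable (M : MemModel Proc Var Val) (σ1 σ2 : List (MemEv Proc Var Val)) : Prop :=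
  ∀ q0 : M.State, M.Stable q0 → σ1 ∈ M.OTraces q0 → σ2 ∈ M.OTraces q0 →
    ∀ σ, Shuffle σ1 σ2 σ → σ ∈ M.OTraces q0

/-- Weak/strong mergeability, selected by a Boolean flag. -/
def MemMergeable (strong : Bool) (M : MemModel Proc Var Val)
    (σ1 σ2 : List (MemEv Proc Var Val)) : Prop :=
  if strong then StronglyMergeable M σ1 σ2 else WeaklyMergeable M σ1 σ2

end MemModel

/-! ### The SCM, TSO and RA memory models -/

section Models

variable (Proc Var Val : Type)

inductive SCMStep [DecidableEq Var] :
    (Var → Val) → Option (MemEv Proc Var Val) → (Var → Val) → Prop where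
  | write (m : Var → Val) (p : Proc) (x : Var) (v : Val) :
      SCMStep m (some ⟨p, MemAct.write x v⟩) (Function.update m x v)
  | read (m : Var → Val) (p : Proc) (x : Var) :
      SCMStep m (some ⟨p, MemAct.read x (m x)⟩) m
  | rmw (m : Var → Val) (p : Proc) (x : Var) (vnew : Val) :
      SCMStep m (some ⟨p, MemAct.rmw x (m x) vnew⟩) (Function.update m x vnew)
  | fence (m : Var → Val) (p : Proc) :
      SCMStep m (some ⟨p, MemAct.fence⟩) m

def SCMModel [DecidableEq Var] [Zero Val] : MemModel Proc Var Val where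
  State := Var → Val
  init := fun _ => 0
  step := SCMStep Proc Var Val

inductive TSOStep [DecidableEq Proc] [DecidableEq Var] :
    (Var → Val) × (Proc → List (Var × Val)) → Option (MemEv Proc Var Val) →
      (Var → Val) × (Proc → List (Var × Val)) → Prop where
  | write (m : Var → Val) (b : Proc → List (Var × Val)) (p : Proc) (x : Var) (v : Val) :
      TSOStep (m, b) (some ⟨p, MemAct.write x v⟩)
        (m, Function.update b p (b p ++ [(x, v)]))
  | readBuffer (m : Var → Val) (b : Proc → List (Var × Val)) (p : Proc) (x : Var) (v : Val) :
      ((b p).filter (fun pr => decide (pr.1 = x))).getLast? = some (x, v) →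
      TSOStep (m, b) (some ⟨p, MemAct.read x v⟩) (m, b)
  | readMemory (m : Var → Val) (b : Proc → List (Var × Val)) (p : Proc) (x : Var) :
      (b p).filter (fun pr => decide (pr.1 = x)) = [] →
      TSOStep (m, b) (some ⟨p, MemAct.read x (m x)⟩) (m, b)
  | rmw (m : Var → Val) (b : Proc → List (Var × Val)) (p : Proc) (x : Var) (vnew : Val) :
      b p = [] →
      TSOStep (m, b) (some ⟨p, MemAct.rmw x (m x) vnew⟩) (Function.update m x vnew, b)
  | fence (m : Var → Val) (b : Proc → List (Var × Val)) (p : Proc) :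
      b p = [] → TSOStep (m, b) (some ⟨p, MemAct.fence⟩) (m, b)
  | propagate (m : Var → Val) (b : Proc → List (Var × Val)) (p : Proc) (x : Var) (v : Val)
      (β : List (Var × Val)) :
      b p = (x, v) :: β →
      TSOStep (m, b) none (Function.update m x v, Function.update b p β)

def TSOModel [DecidableEq Proc] [DecidableEq Var] [Zero Val] : MemModel Proc Var Val where
  State := (Var → Val) × (Proc → List (Var × Val))
  init := (fun _ => 0, fun _ => [])
  step := TSOStep Proc Var Val

/-- A message of the RA memory model. -/
structure RAMsg (Var Val : Type) : Type where
  var : Var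
  val : Val
  time : ℕ
  view : Var → ℕ

structure RAState (Proc Var Val : Type) : Type where
  mem : Set (RAMsg Var Val)
  view : Proc → Var → ℕ
  fview : Var → ℕ

end Models

/-- Pointwise join (maximum) of two views. -/
def viewJoin {Var : Type} (V1 V2 : Var → ℕ) : Var → ℕ := fun y => max (V1 y) (V2 y)

section RA

variable (Proc Var Val : Type)

inductive RAStep [DecidableEq Proc] [DecidableEq Var] :
    RAState Proc Var Val → Option (MemEv Proc Var Val) → RAState Proc Var Val → Prop where
  | write (s : RAState Proc Var Val) (p : Proc) (x : Var) (v : Val) (t : ℕ) :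
      s.view p x < t →
      (∀ μ ∈ s.mem, μ.var = x → μ.time ≠ t) →
      RAStep s (some ⟨p, MemAct.write x v⟩)
        ⟨insert ⟨x, v, t, Function.update (s.view p) x t⟩ s.mem,
         Function.update s.view p (Function.update (s.view p) x t), s.fview⟩
  | read (s : RAState Proc Var Val) (p : Proc) (x : Var) (v : Val) (V : Var → ℕ) :
      (⟨x, v, s.view p x, V⟩ : RAMsg Var Val) ∈ s.mem →
      RAStep s (some ⟨p, MemAct.read x v⟩) s
  | rmw (s : RAState Proc Var Val) (p : Proc) (x : Var) (vexp vnew : Val) (V : Var → ℕ) :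
      (⟨x, vexp, s.view p x, V⟩ : RAMsg Var Val) ∈ s.mem →
      (∀ μ ∈ s.mem, μ.var = x → μ.time ≠ s.view p x + 1) →
      RAStep s (some ⟨p, MemAct.rmw x vexp vnew⟩)
        ⟨insert ⟨x, vnew, s.view p x + 1, Function.update (s.view p) x (s.view p x + 1)⟩ s.mem,
         Function.update s.view p (Function.update (s.view p) x (s.view p x + 1)), s.fview⟩
  | fence (s : RAState Proc Var Val) (p : Proc) :
      RAStep s (some ⟨p, MemAct.fence⟩)
        ⟨s.mem, Function.update s.view p (viewJoin (s.view p) s.fview),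
         viewJoin (s.view p) s.fview⟩
  | propagate (s : RAState Proc Var Val) (p : Proc) (μ : RAMsg Var Val) :
      μ ∈ s.mem → s.view p μ.var < μ.time →
      RAStep s none
        ⟨s.mem, Function.update s.view p (viewJoin (s.view p) μ.view), s.fview⟩

def RAModel [DecidableEq Proc] [DecidableEq Var] [Zero Val] : MemModel Proc Var Val where
  State := RAState Proc Var Val
  init := ⟨{μ | ∃ x : Var, μ = ⟨x, 0, 0, fun _ => 0⟩}, fun _ _ => 0, fun _ => 0⟩
  step := RAStep Proc Var Val

end RA

/-! ### Well-behaved memory models -/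

section WellBehaved

variable {Proc Var Val : Type}

/-- Reachability by silent steps. -/
def TauReach (M : MemModel Proc Var Val) : M.State → M.State → Prop :=
  Relation.ReflTransGen (fun q q' => M.step q none q')

/-- A memory model is well-behaved if there is a simulation from SCM into its stable states. -/
def WellBehaved [DecidableEq Var] [Zero Val] (M : MemModel Proc Var Val) : Prop :=
  ∃ R : (Var → Val) → M.State → Prop,
    (∀ m q, R m q → M.Stable q) ∧
    R (fun _ => (0 : Val)) M.init ∧
    (∀ m q, R m q → ∀ (l : Option (MemEv Proc Var Val)) (m' : Var → Val),
      SCMStep Proc Var Val m l m' →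
      ∃ q1 q' : M.State, M.step q l q1 ∧ TauReach M q1 q' ∧ M.Stable q' ∧ R m' q')

end WellBehaved

/-! ### Patterns of observable memory sequences -/

section Patterns

variable {Proc Var Val : Type}

def IsSolo (σ : List (MemEv Proc Var Val)) : Prop :=
  ∀ e ∈ σ, ∀ e' ∈ σ, MemEv.proc e = MemEv.proc e'

def IsRW (σ : List (MemEv Proc Var Val)) : Prop :=
  ∀ e ∈ σ, MemEv.isWrite e ∨ MemEv.isRead e

def IsRWF (σ : List (MemEv Proc Var Val)) : Prop :=
  ∀ e ∈ σ, MemEv.isWrite e ∨ MemEv.isRead e ∨ MemEv.isFence e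

/-- Read-before-write: no read-after-write pattern on distinct variables. -/
def IsRBW (σ : List (MemEv Proc Var Val)) : Prop :=
  ∀ (k1 k2 : ℕ) (e1 e2 : MemEv Proc Var Val) (x y : Var) (v w : Val),
    k1 < k2 → σ[k1]? = some e1 → σ[k2]? = some e2 →
    e1.act = MemAct.write x v → e2.act = MemAct.read y w → x ≠ y →
    ∃ (k : ℕ) (e : MemEv Proc Var Val) (u : Val),
      k1 < k ∧ k < k2 ∧ σ[k]? = some e ∧ e.act = MemAct.write y u

/-- Trailing-fence: no fence is immediately followed by a non-fence event. -/
def IsTF (σ : List (MemEv Proc Var Val)) : Prop :=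
  ∀ (k : ℕ) (e e' : MemEv Proc Var Val),
    σ[k]? = some e → σ[k + 1]? = some e' → MemEv.isFence e → MemEv.isFence e'

/-- Leading-fence: no fence is immediately preceded by a non-fence event. -/
def IsLF (σ : List (MemEv Proc Var Val)) : Prop :=
  ∀ (k : ℕ) (e e' : MemEv Proc Var Val),
    σ[k]? = some e → σ[k + 1]? = some e' → MemEv.isFence e' → MemEv.isFence e

def IsLTF (σ : List (MemEv Proc Var Val)) : Prop :=
  ∃ σ' σ'' : List (MemEv Proc Var Val), σ = σ' ++ σ'' ∧ IsLF σ' ∧ IsTF σ''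

def IsPPTF [DecidableEq Proc] (σ : List (MemEv Proc Var Val)) : Prop :=
  ∀ p : Proc, IsTF (σ.filter (fun e => decide (e.proc = p)))

def IsPPLF [DecidableEq Proc] (σ : List (MemEv Proc Var Val)) : Prop :=
  ∀ p : Proc, IsLF (σ.filter (fun e => decide (e.proc = p)))

end Patterns

/-! ### Objects, events and histories -/

inductive ObjAct (Op Ret : Type) : Type where
  | inv (o : Op)
  | res (u : Ret)

structure ObjEv (Proc Op Ret : Type) : Type where
  proc : Proc
  act : ObjAct Op Ret

inductive EvAct (Var Val Op Ret : Type) : Type where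
  | mem (a : MemAct Var Val)
  | inv (o : Op)
  | res (u : Ret)

/-- A general event: a memory event or an object event of some process. -/
structure Ev (Proc Var Val Op Ret : Type) : Type where
  proc : Proc
  act : EvAct Var Val Op Ret

section Events

variable {Proc Var Val Op Ret : Type}

def ObjAct.isInv : ObjAct Op Ret → Prop
  | ObjAct.inv _ => True
  | _ => False

def ObjAct.isRes : ObjAct Op Ret → Prop
  | ObjAct.res _ => True
  | _ => False

def Ev.toMem : Ev Proc Var Val Op Ret → Option (MemEv Proc Var Val)
  | ⟨p, EvAct.mem a⟩ => some ⟨p, a⟩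
  | _ => none

def Ev.toObj : Ev Proc Var Val Op Ret → Option (ObjEv Proc Op Ret)
  | ⟨p, EvAct.inv o⟩ => some ⟨p, ObjAct.inv o⟩
  | ⟨p, EvAct.res u⟩ => some ⟨p, ObjAct.res u⟩
  | _ => none

/-- Restriction of an event sequence to its memory events. -/
def restrictMem (π : List (Ev Proc Var Val Op Ret)) : List (MemEv Proc Var Val) :=
  π.filterMap Ev.toMem

/-- Restriction of an event sequence to its object events. -/
def restrictObj (π : List (Ev Proc Var Val Op Ret)) : List (ObjEv Proc Op Ret) :=
  π.filterMap Ev.toObj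

def procsEv (π : List (Ev Proc Var Val Op Ret)) : Set Proc := {p | ∃ e ∈ π, Ev.proc e = p}

def procsObj (h : List (ObjEv Proc Op Ret)) : Set Proc := {p | ∃ e ∈ h, ObjEv.proc e = p}

def Ev.isWriteEv (e : Ev Proc Var Val Op Ret) : Prop :=
  ∃ x v, e.act = EvAct.mem (MemAct.write x v)

def Ev.isReadEv (e : Ev Proc Var Val Op Ret) : Prop :=
  ∃ x v, e.act = EvAct.mem (MemAct.read x v)

def Ev.isResEv (e : Ev Proc Var Val Op Ret) : Prop := ∃ u, e.act = EvAct.res u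

def Ev.isFenceEv (e : Ev Proc Var Val Op Ret) : Prop := e.act = EvAct.mem MemAct.fence

/-- The two-event history `⟨p : o ⇒ u⟩`. -/
def invres (p : Proc) (o : Op) (u : Ret) : List (ObjEv Proc Op Ret) :=
  [⟨p, ObjAct.inv o⟩, ⟨p, ObjAct.res u⟩]

/-- Complete sequential histories: concatenations of matching invocation–response pairs. -/
inductive CompleteSeq : List (ObjEv Proc Op Ret) → Prop where
  | nil : CompleteSeq []
  | cons (p : Proc) (o : Op) (u : Ret) {h : List (ObjEv Proc Op Ret)} :
      CompleteSeq h → CompleteSeq (⟨p, ObjAct.inv o⟩ :: ⟨p, ObjAct.res u⟩ :: h)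

/-- Sequential histories: prefixes of complete sequential histories. -/
def Sequential (h : List (ObjEv Proc Op Ret)) : Prop :=
  ∃ h' : List (ObjEv Proc Op Ret), CompleteSeq h' ∧ h <+: h'

def WellFormed [DecidableEq Proc] (h : List (ObjEv Proc Op Ret)) : Prop :=
  ∀ p : Proc, Sequential (h.filter (fun e => decide (e.proc = p)))

/-- Complete histories: well-formed, and each process's restriction is empty or
ends with a response event. -/
def CompleteH [DecidableEq Proc] (h : List (ObjEv Proc Op Ret)) : Prop :=
  WellFormed h ∧
    ∀ p : Proc, h.filter (fun e => decide (e.proc = p)) = [] ∨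
      ∃ e : ObjEv Proc Op Ret,
        (h.filter (fun e => decide (e.proc = p))).getLast? = some e ∧ e.act.isRes

end Events

/-! ### Reorderings and linearization -/

/-- `Reorder R s s'` : `s'` is an `R`-reordering of `s`. -/
def Reorder {α : Type u} (R : α → α → Prop) (s s' : List α) : Prop :=
  ∃ f : Fin s.length ≃ Fin s'.length,
    (∀ i : Fin s.length, s'.get (f i) = s.get i) ∧
    ∀ i j : Fin s.length, i < j → R (s.get i) (s.get j) → f i < f j

section Lin

variable {Proc Var Val Op Ret : Type}

/-- The `sproc` relation on general events: same process. -/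
def sprocEv (e1 e2 : Ev Proc Var Val Op Ret) : Prop := e1.proc = e2.proc

/-- The `lin` relation on object events. -/
def linRel (e1 e2 : ObjEv Proc Op Ret) : Prop :=
  e1.proc = e2.proc ∨ (e1.act.isRes ∧ e2.act.isInv)

/-- `h ⊑ H'`: some history in `H'` linearizes `h`. -/
def LinInto (Spec : Set (List (ObjEv Proc Op Ret))) (h : List (ObjEv Proc Op Ret)) : Prop :=
  ∃ h' ∈ Spec, Reorder linRel h h'

/-- A specification: a prefix-closed set of complete sequential histories. -/
def IsSpec (Spec : Set (List (ObjEv Proc Op Ret))) : Prop :=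
  (∀ h ∈ Spec, CompleteSeq h) ∧
  (∀ h ∈ Spec, ∀ h' : List (ObjEv Proc Op Ret), h' <+: h → CompleteSeq h' → h' ∈ Spec)

/-- A deterministic object: no two specification histories have a longest common prefix
ending with an invocation. -/
def Deterministic (Spec : Set (List (ObjEv Proc Op Ret))) : Prop :=
  ∀ h1 ∈ Spec, ∀ h2 ∈ Spec, ∀ (g : List (ObjEv Proc Op Ret)) (p : Proc) (o : Op),
    (g ++ [⟨p, ObjAct.inv o⟩]) <+: h1 → (g ++ [⟨p, ObjAct.inv o⟩]) <+: h2 →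
    ∃ e : ObjEv Proc Op Ret,
      (g ++ [⟨p, ObjAct.inv o⟩, e]) <+: h1 ∧ (g ++ [⟨p, ObjAct.inv o⟩, e]) <+: h2

def WeaklySpecMergeableAfter (Spec : Set (List (ObjEv Proc Op Ret)))
    (h0 h1 h2 : List (ObjEv Proc Op Ret)) : Prop :=
  LinInto Spec (h0 ++ h1) → LinInto Spec (h0 ++ h2) →
    ∃ h, Shuffle h1 h2 h ∧ LinInto Spec (h0 ++ h)

def StronglySpecMergeableAfter (Spec : Set (List (ObjEv Proc Op Ret)))
    (h0 h1 h2 : List (ObjEv Proc Op Ret)) : Prop :=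
  LinInto Spec (h0 ++ h1) → LinInto Spec (h0 ++ h2) →
    ∀ h, Shuffle h1 h2 h → LinInto Spec (h0 ++ h)

def SpecMergeableAfter (strong : Bool) (Spec : Set (List (ObjEv Proc Op Ret)))
    (h0 h1 h2 : List (ObjEv Proc Op Ret)) : Prop :=
  if strong then StronglySpecMergeableAfter Spec h0 h1 h2
  else WeaklySpecMergeableAfter Spec h0 h1 h2

/-- One-sided non-commutativity. -/
def OneSidedNonComm (Spec : Set (List (ObjEv Proc Op Ret))) (o1 o2 : Op) : Prop :=
  ∃ (h0 : List (ObjEv Proc Op Ret)) (p1 p2 : Proc) (u1 v1 u2 : Ret),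
    CompleteSeq h0 ∧ p1 ≠ p2 ∧ u1 ≠ v1 ∧
    h0 ++ invres p1 o1 u1 ∈ Spec ∧
    h0 ++ invres p2 o2 u2 ++ invres p1 o1 v1 ∈ Spec

/-- Two-sided non-commutativity. -/
def TwoSidedNonComm (Spec : Set (List (ObjEv Proc Op Ret))) (o1 o2 : Op) : Prop :=
  ∃ (h0 : List (ObjEv Proc Op Ret)) (p1 p2 : Proc) (u1 v1 u2 v2 : Ret),
    CompleteSeq h0 ∧ p1 ≠ p2 ∧ u1 ≠ v1 ∧ u2 ≠ v2 ∧
    h0 ++ invres p1 o1 u1 ++ invres p2 o2 v2 ∈ Spec ∧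
    h0 ++ invres p2 o2 u2 ++ invres p1 o1 v1 ∈ Spec

end Lin

/-! ### Implementations -/

/-- An implementation of an operation for a process `p`: an LTS labeled by events of `p`
in which a response event is always the last transition. -/
structure OpImpl (Proc Var Val Op Ret : Type) (p : Proc) : Type 1 where
  State : Type
  init : State
  step : State → Ev Proc Var Val Op Ret → State → Prop
  proc_eq : ∀ q e q', step q e q' → Ev.proc e = p
  res_final : ∀ (q : State) (u : Ret) (q' : State),
    step q ⟨p, EvAct.res u⟩ q' → ∀ e q'', ¬ step q' e q''

section Impl

variable {Proc Var Val Op Ret : Type}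

def OpImpl.traces {p : Proc} (Iop : OpImpl Proc Var Val Op Ret p) :
    Set (List (Ev Proc Var Val Op Ret)) :=
  {π | ∃ q : Iop.State, LTSPath Iop.step Iop.init π q}

/-- An implementation of an object. -/
def Impl (Proc Var Val Op Ret : Type) : Type 1 :=
  (o : Op) → (p : Proc) → OpImpl Proc Var Val Op Ret p

/-- Per-process states of the system induced by an implementation: `none` is idle. -/
def SIPState (I : Impl Proc Var Val Op Ret) (p : Proc) : Type :=
  Option ((o : Op) × (I o p).State)

/-- Per-process transitions of the system induced by an implementation. -/
inductive SIPStep (I : Impl Proc Var Val Op Ret) (p : Proc) :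
    SIPState I p → Ev Proc Var Val Op Ret → SIPState I p → Prop where
  | invoke (o : Op) :
      SIPStep I p none ⟨p, EvAct.inv o⟩ (some ⟨o, (I o p).init⟩)
  | memStep {o : Op} {q q' : (I o p).State} (a : MemAct Var Val) :
      (I o p).step q ⟨p, EvAct.mem a⟩ q' →
      SIPStep I p (some ⟨o, q⟩) ⟨p, EvAct.mem a⟩ (some ⟨o, q'⟩)
  | resStep {o : Op} {q q' : (I o p).State} (u : Ret) :
      (I o p).step q ⟨p, EvAct.res u⟩ q' →
      SIPStep I p (some ⟨o, q⟩) ⟨p, EvAct.res u⟩ none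

def SIState (I : Impl Proc Var Val Op Ret) : Type :=
  (p : Proc) → SIPState I p

/-- The system induced by an implementation interleaves the processes. -/
inductive SIStep [DecidableEq Proc] (I : Impl Proc Var Val Op Ret) :
    SIState I → Ev Proc Var Val Op Ret → SIState I → Prop where
  | mk (s : SIState I) (p : Proc) (e : Ev Proc Var Val Op Ret) (t : SIPState I p) :
      SIPStep I p (s p) e t → SIStep I s e (Function.update s p t)

def ImplTraces [DecidableEq Proc] (I : Impl Proc Var Val Op Ret) :
    Set (List (Ev Proc Var Val Op Ret)) :=
  {π | ∃ s : SIState I, LTSPath (SIStep I) (fun _ => none) π s}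

/-- Histories generated by `I` after `π0` under memory model `M`. -/
def GenHist [DecidableEq Proc] (π0 : List (Ev Proc Var Val Op Ret))
    (I : Impl Proc Var Val Op Ret) (M : MemModel Proc Var Val) :
    Set (List (ObjEv Proc Op Ret)) :=
  {h | ∃ π : List (Ev Proc Var Val Op Ret),
      π0 ++ π ∈ ImplTraces I ∧ restrictObj π = h ∧
      restrictMem (π0 ++ π) ∈ M.OTraces M.init}

/-- Consistency: every complete generated history linearizes into the specification. -/
def Consistent [DecidableEq Proc] (I : Impl Proc Var Val Op Ret)
    (M : MemModel Proc Var Val) (Spec : Set (List (ObjEv Proc Op Ret))) : Prop :=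
  ∀ h ∈ GenHist [] I M, CompleteH h → LinInto Spec h

/-- Availability after `h0` w.r.t. `h`. -/
def AvailableAfter [DecidableEq Proc] [DecidableEq Var] [Zero Val]
    (I : Impl Proc Var Val Op Ret) (h0 h : List (ObjEv Proc Op Ret)) : Prop :=
  ∀ π0 ∈ ImplTraces I,
    restrictMem π0 ∈ (SCMModel Proc Var Val).OTraces (SCMModel Proc Var Val).init →
    restrictObj π0 = h0 →
    h ∈ GenHist π0 I (SCMModel Proc Var Val)

def SpecAvailable [DecidableEq Proc] [DecidableEq Var] [Zero Val]
    (I : Impl Proc Var Val Op Ret) (Spec : Set (List (ObjEv Proc Op Ret))) : Prop :=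
  ∀ h0 h : List (ObjEv Proc Op Ret), CompleteSeq h0 → CompleteSeq h →
    h0 ++ h ∈ Spec → AvailableAfter I h0 h

end Impl

/-! ### Fence insertion -/

section Fence

variable {Proc Var Val Op Ret : Type}

/-- `FenceInsertion π π'` : `π'` is obtained from `π` by inserting fence events. -/
inductive FenceInsertion : List (Ev Proc Var Val Op Ret) → List (Ev Proc Var Val Op Ret) → Prop where
  | nil : FenceInsertion [] []
  | keep (e : Ev Proc Var Val Op Ret) {π π' : List (Ev Proc Var Val Op Ret)} :
      FenceInsertion π π' → FenceInsertion (e :: π) (e :: π')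
  | fence (p : Proc) {π π' : List (Ev Proc Var Val Op Ret)} :
      FenceInsertion π π' → FenceInsertion π (⟨p, EvAct.mem MemAct.fence⟩ :: π')

/-- Every write is separated from every later read or response by a fence. -/
def FencedWrites (π : List (Ev Proc Var Val Op Ret)) : Prop :=
  ∀ (i j : ℕ) (ei ej : Ev Proc Var Val Op Ret),
    i < j → π[i]? = some ei → π[j]? = some ej →
    Ev.isWriteEv ei → (Ev.isReadEv ej ∨ Ev.isResEv ej) →
    ∃ (k : ℕ) (ek : Ev Proc Var Val Op Ret),
      i < k ∧ k < j ∧ π[k]? = some ek ∧ Ev.isFenceEv ek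

/-- Histories generated by `I` under `M` (from the initial state). -/
def GeneratedHistories [DecidableEq Proc] (I : Impl Proc Var Val Op Ret)
    (M : MemModel Proc Var Val) : Set (List (ObjEv Proc Op Ret)) :=
  {h | ∃ π ∈ ImplTraces I, restrictObj π = h ∧ restrictMem π ∈ M.OTraces M.init}

end Fence

/-! ### The snapshot object -/

inductive SnapOp (W : Type) : Type where
  | update (w : W)
  | scan

inductive SnapRet (Proc W : Type) : Type where
  | ack
  | vec (v : Proc → Option W)

section Snapshot

variable {Proc W : Type}

/-- The sequential specification of the single-writer snapshot object, threaded
through the current contents `s`. -/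
inductive SnapSpecFrom [DecidableEq Proc] :
    (Proc → Option W) → List (ObjEv Proc (SnapOp W) (SnapRet Proc W)) → Prop where
  | nil (s : Proc → Option W) : SnapSpecFrom s []
  | update (s : Proc → Option W) (p : Proc) (w : W)
      {h : List (ObjEv Proc (SnapOp W) (SnapRet Proc W))} :
      SnapSpecFrom (Function.update s p (some w)) h →
      SnapSpecFrom s (⟨p, ObjAct.inv (SnapOp.update w)⟩ :: ⟨p, ObjAct.res SnapRet.ack⟩ :: h)
  | scan (s : Proc → Option W) (p : Proc)
      {h : List (ObjEv Proc (SnapOp W) (SnapRet Proc W))} :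
      SnapSpecFrom s h →
      SnapSpecFrom s (⟨p, ObjAct.inv SnapOp.scan⟩ :: ⟨p, ObjAct.res (SnapRet.vec s)⟩ :: h)

def SnapSpec (Proc W : Type) [DecidableEq Proc] :
    Set (List (ObjEv Proc (SnapOp W) (SnapRet Proc W))) :=
  {h | SnapSpecFrom (fun _ => none) h}

end Snapshot

/-! ### Auxiliary lemmas for shuffle closure -/

section ShuffleClosure

variable {Proc Var Val Op Ret : Type}

theorem LTSPath.myAppend {S : Type u} {L : Type v} {step : S → L → S → Prop}
    {s s' s'' : S} {l1 l2 : List L} (h1 : LTSPath step s l1 s')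
    (h2 : LTSPath step s' l2 s'') : LTSPath step s (l1 ++ l2) s'' := by
  induction h1 with
  | nil => simpa
  | cons hst _ ih => exact LTSPath.cons hst (ih h2)

theorem LTSPath.mySplit {S : Type u} {L : Type v} {step : S → L → S → Prop}
    {s s'' : S} {l1 l2 : List L}
    (h : LTSPath step s (l1 ++ l2) s'') :
    ∃ s', LTSPath step s l1 s' ∧ LTSPath step s' l2 s'' := by
  induction l1 generalizing s with
  | nil => exact ⟨s, LTSPath.nil s, h⟩
  | cons a l ih =>
    cases h with
    | cons hst hp =>
      obtain ⟨m, ha, hb⟩ := ih hp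
      exact ⟨m, LTSPath.cons hst ha, hb⟩

theorem LTSPath.nil_eq {S : Type u} {L : Type v} {step : S → L → S → Prop}
    {s s' : S} (h : LTSPath step s ([] : List L) s') : s' = s := by
  cases h; rfl

theorem SIPStep.procEq {I : Impl Proc Var Val Op Ret} {p : Proc}
    {t t' : SIPState I p} {e : Ev Proc Var Val Op Ret}
    (h : SIPStep I p t e t') : e.proc = p := by cases h <;> rfl

theorem SIStep_decompose [DecidableEq Proc] {I : Impl Proc Var Val Op Ret}
    {s s' : SIState I} {π : List (Ev Proc Var Val Op Ret)}
    (h : LTSPath (SIStep I) s π s') (p : Proc) :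
    LTSPath (SIPStep I p) (s p) (π.filter (fun e => decide (e.proc = p))) (s' p) := by
  induction h with
  | nil => exact LTSPath.nil _
  | cons hst hp ih =>
    rename_i s s1 s'' l ls
    cases hst
    rename_i q t hq
    by_cases hpq : l.proc = p
    · have hqp : q = p := by rw [← hpq, hq.procEq]
      subst hqp
      simp only [List.filter_cons, hpq, decide_eq_true_eq, if_pos]
      refine LTSPath.cons hq ?_
      convert ih using 2
      exact (Function.update_self (β := fun a => SIPState I a) q t s).symm
    · have hqp : q ≠ p := by rw [← hq.procEq]; exact hpq
      simp only [List.filter_cons, decide_eq_true_eq, if_neg hpq]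
      convert ih using 2
      exact (Function.update_of_ne (β := fun a => SIPState I a) (Ne.symm hqp) t s).symm

theorem SIStep_compose [DecidableEq Proc] {I : Impl Proc Var Val Op Ret} :
    ∀ (π : List (Ev Proc Var Val Op Ret)) (s f : SIState I),
    (∀ p, LTSPath (SIPStep I p) (s p) (π.filter (fun e => decide (e.proc = p))) (f p)) →
    LTSPath (SIStep I) s π f := by
  intro π
  induction π with
  | nil =>
    intro s f h
    have : f = s := funext fun p => by simpa using (h p).nil_eq
    subst this
    exact LTSPath.nil _
  | cons e rest ih =>
    intro s f h
    have h0 := h e.proc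
    simp only [List.filter_cons, decide_eq_true_eq, if_pos rfl] at h0
    cases h0 with
    | cons hst hrest =>
      rename_i t
      refine LTSPath.cons (SIStep.mk s e.proc e t hst) ?_
      apply ih
      intro p
      by_cases hp : p = e.proc
      · subst hp
        convert hrest using 2
        exact Function.update_self (β := fun a => SIPState I a) e.proc t s
      · have hh := h p
        simp only [List.filter_cons, decide_eq_true_eq] at hh
        rw [if_neg (fun he => hp (by rw [← he]))] at hh
        convert hh using 2
        exact Function.update_of_ne (β := fun a => SIPState I a) hp t s

theorem Shuffle.myFilter {α : Type u} {s1 s2 s : List α} (h : Shuffle s1 s2 s)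
    (q : α → Bool) : Shuffle (s1.filter q) (s2.filter q) (s.filter q) := by
  induction h with
  | nil => exact .nil
  | left x _ ih =>
    by_cases hx : q x
    · simpa [List.filter_append, hx] using Shuffle.left x ih
    · simpa [List.filter_append, hx] using ih
  | right x _ ih =>
    by_cases hx : q x
    · simpa [List.filter_append, hx] using Shuffle.right x ih
    · simpa [List.filter_append, hx] using ih

theorem Shuffle.right_nil {α : Type u} {s1 s2 s : List α} (h : Shuffle s1 s2 s)
    (h2 : s2 = []) : s = s1 := by
  induction h with
  | nil => rfl
  | left x _ ih => rw [ih h2]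
  | right x _ ih => simp at h2

theorem Shuffle.left_nil {α : Type u} {s1 s2 s : List α} (h : Shuffle s1 s2 s)
    (h1 : s1 = []) : s = s2 := by
  induction h with
  | nil => rfl
  | left x _ ih => simp at h1
  | right x _ ih => rw [ih h1]

theorem restrictObj_filter [DecidableEq Proc]
    (π : List (Ev Proc Var Val Op Ret)) (p : Proc) :
    restrictObj (π.filter (fun e => decide (e.proc = p)))
      = (restrictObj π).filter (fun e => decide (e.proc = p)) := by
  induction π with
  | nil => rfl
  | cons e rest ih =>
    obtain ⟨q, a⟩ := e
    by_cases h : q = p <;> cases a <;>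
      simp_all [restrictObj, Ev.toObj, List.filter_cons, List.filterMap_cons]

theorem filter_eq_nil_of_not_mem_procs [DecidableEq Proc]
    {π : List (Ev Proc Var Val Op Ret)} {p : Proc}
    (h : p ∉ procsEv π) : π.filter (fun e => decide (e.proc = p)) = [] := by
  rw [List.filter_eq_nil_iff]
  intro e he
  simp only [decide_eq_true_eq]
  exact fun hep => h ⟨e, he, hep⟩

theorem SIPPath_none_of_complete {I : Impl Proc Var Val Op Ret} {p : Proc} :
    ∀ {σ : List (Ev Proc Var Val Op Ret)} {t q : SIPState I p},
    LTSPath (SIPStep I p) t σ q →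
    ((restrictObj σ = [] ∧ t = none) ∨
      ∃ e : ObjEv Proc Op Ret, (restrictObj σ).getLast? = some e ∧ e.act.isRes) →
    q = none := by
  intro σ t q hpath
  induction hpath with
  | nil =>
    rintro (⟨-, rfl⟩ | ⟨e, he, -⟩)
    · rfl
    · simp [restrictObj] at he
  | cons hst hrest ih =>
    rename_i t t1 q' e σ'
    intro hyp
    cases hst with
    | invoke o =>
      have hre : restrictObj (⟨p, EvAct.inv o⟩ :: σ')
          = ⟨p, ObjAct.inv o⟩ :: restrictObj σ' := by
        simp [restrictObj, Ev.toObj]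
      rw [hre] at hyp
      apply ih
      right
      rcases hyp with ⟨hnil, -⟩ | ⟨e', he', hres⟩
      · exact absurd hnil (by simp)
      · rcases hσ : restrictObj σ' with _ | ⟨b, l⟩
        · rw [hσ] at he'
          simp at he'
          rw [← he'] at hres
          exact absurd hres (by simp [ObjAct.isRes])
        · rw [hσ, List.getLast?_cons_cons] at he'
          exact ⟨e', he', hres⟩
    | memStep a hm =>
      apply ih
      have hre : restrictObj (⟨p, EvAct.mem a⟩ :: σ') = restrictObj σ' := by
        simp [restrictObj, Ev.toObj, List.filterMap_cons]
      rw [hre] at hyp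
      rcases hyp with ⟨hnil, ht⟩ | h
      · exact absurd ht (by simp)
      · exact Or.inr h
    | resStep u hr =>
      apply ih
      rcases hσ : restrictObj σ' with _ | ⟨b, l⟩
      · exact Or.inl ⟨rfl, rfl⟩
      · right
        rcases hyp with ⟨hnil, -⟩ | ⟨e', he', hres⟩
        · exact absurd hnil (by simp [restrictObj, Ev.toObj])
        · have hre : restrictObj (⟨p, EvAct.res u⟩ :: σ')
              = ⟨p, ObjAct.res u⟩ :: restrictObj σ' := by
            simp [restrictObj, Ev.toObj]
          rw [hre, hσ, List.getLast?_cons_cons] at he'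
          exact ⟨e', he', hres⟩

end ShuffleClosure

/-- closure of implementation traces under shuffles of continuations
by disjoint sets of processes. -/
theorem implTraces_shuffle_closed (Proc Var Val Op Ret : Type) [Fintype Proc]
    [DecidableEq Proc]
    (I : Impl Proc Var Val Op Ret)
    (π0 π1 π2 π : List (Ev Proc Var Val Op Ret))
    (h1 : π0 ++ π1 ∈ ImplTraces I) (h2 : π0 ++ π2 ∈ ImplTraces I)
    (hc : CompleteH (restrictObj π0))
    (hd : procsEv π1 ∩ procsEv π2 = ∅)
    (hs : Shuffle π1 π2 π) :
    π0 ++ π ∈ ImplTraces I := by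
  classical
  obtain ⟨s1, hp1⟩ := h1
  obtain ⟨s2, hp2⟩ := h2
  obtain ⟨m1, hπ0a, hπ1⟩ := LTSPath.mySplit hp1
  obtain ⟨m2, hπ0b, hπ2⟩ := LTSPath.mySplit hp2
  have hm : ∀ (m : SIState I), LTSPath (SIStep I) (fun _ => none) π0 m →
      m = fun _ => none := by
    intro m hmm
    funext p
    have hdec := SIStep_decompose hmm p
    refine SIPPath_none_of_complete hdec ?_
    rw [restrictObj_filter]
    rcases hc.2 p with h | ⟨e, he, hres⟩
    · exact Or.inl ⟨h, rfl⟩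
    · exact Or.inr ⟨e, he, hres⟩
  have hm1 := hm m1 hπ0a
  have hm2 := hm m2 hπ0b
  subst hm1
  subst hm2
  refine ⟨fun p => if p ∈ procsEv π1 then s1 p else s2 p,
    LTSPath.myAppend hπ0a (SIStep_compose π _ _ ?_)⟩
  intro p
  have hsf := Shuffle.myFilter hs (fun e => decide (e.proc = p))
  by_cases hp : p ∈ procsEv π1
  · have hp2' : p ∉ procsEv π2 := fun hmem =>
      (Set.eq_empty_iff_forall_notMem.mp hd p) ⟨hp, hmem⟩
    have hπf : π.filter (fun e => decide (e.proc = p))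
        = π1.filter (fun e => decide (e.proc = p)) :=
      hsf.right_nil (filter_eq_nil_of_not_mem_procs hp2')
    rw [hπf]
    simp only [if_pos hp]
    exact SIStep_decompose hπ1 p
  · have hπf : π.filter (fun e => decide (e.proc = p))
        = π2.filter (fun e => decide (e.proc = p)) :=
      hsf.left_nil (filter_eq_nil_of_not_mem_procs hp)
    rw [hπf]
    simp only [if_neg hp]
    exact SIStep_decompose hπ2 p


end WMM
end

section
/- Let 𝓘 be an implementation of an object O and M a memory model. Suppose there exist event sequences π0, π1, π2 such that (a) procs(π1) ∩ procs(π2) = ∅, π0·π1 ∈ traces(𝓘), π0·π2 ∈ traces(𝓘), and π0|_obj is a complete history of O; and (b) (π0|_mem)·σ ∈ OTraces(M) for some (resp. every) σ ∈ (π1|_mem) ⧢ (π2|_mem). Then h ∈ H(π0, 𝓘, M) for some (resp. every) h ∈ (π1|_obj) ⧢ (π2|_obj). -/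
set_option autoImplicit false

namespace WMM

universe u v

/-! ### Auxiliary lemmas for the merge lemma -/

section MergeAux

lemma ltspath_nil_eq {S : Type u} {L : Type v} {step : S → L → S → Prop} {s t : S}
    (h : LTSPath step s [] t) : t = s := by cases h; rfl

lemma ltspath_append {S : Type u} {L : Type v} {step : S → L → S → Prop}
    {s t u : S} {l1 l2 : List L}
    (h1 : LTSPath step s l1 t) (h2 : LTSPath step t l2 u) : LTSPath step s (l1 ++ l2) u := by
  induction h1 with
  | nil => exact h2
  | cons hst _ ih => exact LTSPath.cons hst (ih h2)

lemma ltspath_append_split {S : Type u} {L : Type v} {step : S → L → S → Prop} :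
    ∀ {l1 l2 : List L} {s u : S}, LTSPath step s (l1 ++ l2) u →
    ∃ t, LTSPath step s l1 t ∧ LTSPath step t l2 u := by
  intro l1
  induction l1 with
  | nil => intro l2 s u h; exact ⟨s, LTSPath.nil s, h⟩
  | cons x xs ih =>
    intro l2 s u h
    cases h with
    | cons hst hrest =>
      obtain ⟨t, h1, h2⟩ := ih hrest
      exact ⟨t, LTSPath.cons hst h1, h2⟩

lemma ltspath_snoc {S : Type u} {L : Type v} {step : S → L → S → Prop}
    {l : List L} {x : L} {s u : S} (h : LTSPath step s (l ++ [x]) u) :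
    ∃ t, LTSPath step s l t ∧ step t x u := by
  obtain ⟨t, h1, h2⟩ := ltspath_append_split h
  cases h2 with
  | cons hst hrest => cases hrest; exact ⟨t, h1, hst⟩

lemma shuffle_nil_right {α : Type u} (a : List α) : Shuffle a [] a := by
  induction a using List.reverseRecOn with
  | nil => exact Shuffle.nil
  | append_singleton a' x ih => exact Shuffle.left x ih

lemma shuffle_append_left {α : Type u} {s1 s2 s : List α} (h : Shuffle s1 s2 s) :
    ∀ l : List α, Shuffle (s1 ++ l) s2 (s ++ l) := by
  intro l
  induction l using List.reverseRecOn with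
  | nil => simpa using h
  | append_singleton l' x ih =>
    rw [← List.append_assoc, ← List.append_assoc]
    exact Shuffle.left x ih

lemma shuffle_append_right {α : Type u} {s1 s2 s : List α} (h : Shuffle s1 s2 s) :
    ∀ l : List α, Shuffle s1 (s2 ++ l) (s ++ l) := by
  intro l
  induction l using List.reverseRecOn with
  | nil => simpa using h
  | append_singleton l' x ih =>
    rw [← List.append_assoc, ← List.append_assoc]
    exact Shuffle.right x ih

lemma shuffle_filterMap {α : Type u} {β : Type v} (f : α → Option β)
    {a b c : List α} (h : Shuffle a b c) :
    Shuffle (a.filterMap f) (b.filterMap f) (c.filterMap f) := by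
  induction h with
  | nil => exact Shuffle.nil
  | left x h ih =>
    rw [List.filterMap_append, List.filterMap_append]
    cases hfx : f x with
    | none => simpa [hfx] using ih
    | some y =>
      simp only [List.filterMap_cons, hfx, List.filterMap_nil]
      exact Shuffle.left y ih
  | right x h ih =>
    rw [List.filterMap_append (l' := [x]), List.filterMap_append (l' := [x])]
    cases hfx : f x with
    | none => simpa [hfx] using ih
    | some y =>
      simp only [List.filterMap_cons, hfx, List.filterMap_nil]
      exact Shuffle.right y ih

lemma filterMap_snoc_split {α : Type u} {β : Type v} (f : α → Option β) :
    ∀ (a : List α) (l : List β) (x : β), a.filterMap f = l ++ [x] →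
    ∃ (a1 : List α) (e : α) (a2 : List α),
      a = a1 ++ e :: a2 ∧ a1.filterMap f = l ∧ f e = some x ∧ a2.filterMap f = [] := by
  intro a
  induction a using List.reverseRecOn with
  | nil => intro l x h; simp at h
  | append_singleton a' e ih =>
    intro l x h
    rw [List.filterMap_append] at h
    cases hfe : f e with
    | none =>
      simp only [List.filterMap_cons, hfe, List.filterMap_nil, List.append_nil] at h
      obtain ⟨a1, e', a2, rfl, h1, h2, h3⟩ := ih l x h
      refine ⟨a1, e', a2 ++ [e], by simp, h1, h2, ?_⟩
      rw [List.filterMap_append]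
      simp [h3, hfe]
    | some y =>
      simp only [List.filterMap_cons, hfe, List.filterMap_nil] at h
      have := List.append_inj' h rfl
      obtain ⟨h1, h2⟩ := this
      have hyx : y = x := by simpa using h2
      exact ⟨a', e, [], by simp, h1, by rw [hfe, hyx], rfl⟩

lemma shuffle_lift {α : Type u} {β : Type v} (f : α → Option β) :
    ∀ {h1 h2 h : List β}, Shuffle h1 h2 h →
    ∀ {a b : List α}, a.filterMap f = h1 → b.filterMap f = h2 →
    ∃ c, Shuffle a b c ∧ c.filterMap f = h := by
  intro h1 h2 h hsh
  induction hsh with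
  | nil =>
    intro a b ha hb
    refine ⟨a ++ b, ?_, by rw [List.filterMap_append, ha, hb]; rfl⟩
    have := shuffle_append_right (shuffle_nil_right a) b
    simpa using this
  | left x hsh ih =>
    intro a b ha hb
    obtain ⟨a1, e, a2, rfl, h1', h2', h3'⟩ := filterMap_snoc_split f a _ x ha
    obtain ⟨c, hc, hfc⟩ := ih h1' hb
    refine ⟨c ++ e :: a2, shuffle_append_left hc (e :: a2), ?_⟩
    rw [List.filterMap_append, hfc, List.filterMap_cons, h2', h3']
  | right x hsh ih =>
    intro a b ha hb
    obtain ⟨b1, e, b2, rfl, h1', h2', h3'⟩ := filterMap_snoc_split f b _ x hb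
    obtain ⟨c, hc, hfc⟩ := ih ha h1'
    refine ⟨c ++ e :: b2, shuffle_append_right hc (e :: b2), ?_⟩
    rw [List.filterMap_append, hfc, List.filterMap_cons, h2', h3']

variable {Proc Var Val Op Ret : Type} [DecidableEq Proc]

lemma sipstep_proc {I : Impl Proc Var Val Op Ret} {p : Proc} {q q' : SIPState I p}
    {e : Ev Proc Var Val Op Ret} (h : SIPStep I p q e q') : e.proc = p := by
  cases h <;> rfl

lemma sistep_decomp {I : Impl Proc Var Val Op Ret} {s s' : SIState I}
    {e : Ev Proc Var Val Op Ret} (h : SIStep I s e s') :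
    ∃ (p : Proc) (t : SIPState I p), e.proc = p ∧ SIPStep I p (s p) e t ∧
      s' = Function.update s p t := by
  cases h with
  | mk p b t hstep =>
    exact ⟨p, t, sipstep_proc hstep, hstep, rfl⟩

lemma sistep_frame {I : Impl Proc Var Val Op Ret} {s s' : SIState I}
    {e : Ev Proc Var Val Op Ret} (h : SIStep I s e s') :
    ∀ q, q ≠ e.proc → s' q = s q := by
  obtain ⟨pq, t, hproc, _, rfl⟩ := sistep_decomp h
  subst hproc
  intro q hq
  exact Function.update_of_ne hq _ _

lemma path_frame {I : Impl Proc Var Val Op Ret} {s t : SIState I}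
    {π : List (Ev Proc Var Val Op Ret)} (h : LTSPath (SIStep I) s π t) :
    ∀ p, p ∉ procsEv π → t p = s p := by
  induction h with
  | nil => intro p _; rfl
  | @cons s s' s'' l ls hst hrest ih =>
    intro p hp
    have hpl : p ≠ l.proc := by
      intro hpe
      exact hp ⟨l, List.mem_cons_self, hpe.symm⟩
    have hpls : p ∉ procsEv ls := by
      intro ⟨e, he, hpe⟩
      exact hp ⟨e, List.mem_cons_of_mem _ he, hpe⟩
    rw [ih p hpls, sistep_frame hst p hpl]

lemma mem_procsEv_append {π1 π2 : List (Ev Proc Var Val Op Ret)} {p : Proc} :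
    p ∈ procsEv (π1 ++ π2) ↔ p ∈ procsEv π1 ∨ p ∈ procsEv π2 := by
  constructor
  · rintro ⟨e, he, hp⟩
    rcases List.mem_append.mp he with h | h
    · exact Or.inl ⟨e, h, hp⟩
    · exact Or.inr ⟨e, h, hp⟩
  · rintro (⟨e, he, hp⟩ | ⟨e, he, hp⟩)
    · exact ⟨e, List.mem_append.mpr (Or.inl he), hp⟩
    · exact ⟨e, List.mem_append.mpr (Or.inr he), hp⟩

lemma interleave {I : Impl Proc Var Val Op Ret} :
    ∀ {π1 π2 π : List (Ev Proc Var Val Op Ret)}, Shuffle π1 π2 π →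
    ∀ {s t1 t2 : SIState I},
    (∀ p, p ∈ procsEv π1 → p ∈ procsEv π2 → False) →
    LTSPath (SIStep I) s π1 t1 → LTSPath (SIStep I) s π2 t2 →
    ∃ t, LTSPath (SIStep I) s π t ∧
      ∀ p, (p ∈ procsEv π1 → t p = t1 p) ∧ (p ∉ procsEv π1 → t p = t2 p) := by
  intro π1 π2 π hsh
  induction hsh with
  | nil =>
    intro s t1 t2 _ h1 h2
    have ht1 : t1 = s := ltspath_nil_eq h1
    have ht2 : t2 = s := ltspath_nil_eq h2
    refine ⟨s, LTSPath.nil s, fun p => ⟨?_, fun _ => congrFun ht2.symm p⟩⟩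
    rintro ⟨e, he, _⟩; simp at he
  | @left s1 s2 sl x hsh ih =>
    intro s t1 t2 hdisj h1 h2
    obtain ⟨t1', hp1, hstep⟩ := ltspath_snoc h1
    have hdisj' : ∀ p, p ∈ procsEv s1 → p ∈ procsEv s2 → False := fun p hp1' hp2' =>
      hdisj p (mem_procsEv_append.mpr (Or.inl hp1')) hp2'
    obtain ⟨t, ht, hcond⟩ := ih hdisj' hp1 h2
    obtain ⟨pq, tp, hproc, hsip, rfl⟩ := sistep_decomp hstep
    subst hproc
    have hxin : x.proc ∈ procsEv (s1 ++ [x]) :=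
      ⟨x, List.mem_append.mpr (Or.inr (List.mem_singleton_self x)), rfl⟩
    have hteq : t x.proc = t1' x.proc := by
      by_cases hmem : x.proc ∈ procsEv s1
      · exact (hcond x.proc).1 hmem
      · have h2f : t2 x.proc = s x.proc :=
          path_frame h2 x.proc (fun hc => hdisj x.proc hxin hc)
        have h1f : t1' x.proc = s x.proc := path_frame hp1 x.proc hmem
        rw [(hcond x.proc).2 hmem, h2f, h1f]
    have hstep' : SIStep I t x (Function.update t x.proc tp) := by
      refine SIStep.mk t x.proc x tp ?_
      rw [hteq]; exact hsip
    refine ⟨Function.update t x.proc tp,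
      ltspath_append ht (LTSPath.cons hstep' (LTSPath.nil _)), fun p => ⟨?_, ?_⟩⟩
    · intro hp
      by_cases hpx : p = x.proc
      · subst hpx; exact (Function.update_self _ _ _).trans (Function.update_self _ _ _).symm
      · erw [Function.update_of_ne hpx, Function.update_of_ne hpx]
        rcases mem_procsEv_append.mp hp with h | h
        · exact (hcond p).1 h
        · exfalso
          obtain ⟨e, he, hpe⟩ := h
          rw [List.mem_singleton] at he
          subst he
          exact hpx hpe.symm
    · intro hp
      have hpx : p ≠ x.proc := fun hc => hp (hc ▸ hxin)
      have hps1 : p ∉ procsEv s1 := fun hc => hp (mem_procsEv_append.mpr (Or.inl hc))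
      erw [Function.update_of_ne hpx]
      exact (hcond p).2 hps1
  | @right s1 s2 sl x hsh ih =>
    intro s t1 t2 hdisj h1 h2
    obtain ⟨t2', hp2, hstep⟩ := ltspath_snoc h2
    have hdisj' : ∀ p, p ∈ procsEv s1 → p ∈ procsEv s2 → False := fun p hp1' hp2' =>
      hdisj p hp1' (mem_procsEv_append.mpr (Or.inl hp2'))
    obtain ⟨t, ht, hcond⟩ := ih hdisj' h1 hp2
    obtain ⟨pq, tp, hproc, hsip, rfl⟩ := sistep_decomp hstep
    subst hproc
    have hxin : x.proc ∈ procsEv (s2 ++ [x]) :=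
      ⟨x, List.mem_append.mpr (Or.inr (List.mem_singleton_self x)), rfl⟩
    have hxs1 : x.proc ∉ procsEv s1 := fun hc => hdisj x.proc hc hxin
    have hteq : t x.proc = t2' x.proc := (hcond x.proc).2 hxs1
    have hstep' : SIStep I t x (Function.update t x.proc tp) := by
      refine SIStep.mk t x.proc x tp ?_
      rw [hteq]; exact hsip
    refine ⟨Function.update t x.proc tp,
      ltspath_append ht (LTSPath.cons hstep' (LTSPath.nil _)), fun p => ⟨?_, ?_⟩⟩
    · intro hp
      have hpx : p ≠ x.proc := fun hc => hxs1 (hc ▸ hp)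
      erw [Function.update_of_ne hpx]
      exact (hcond p).1 hp
    · intro hp
      by_cases hpx : p = x.proc
      · subst hpx; exact (Function.update_self _ _ _).trans (Function.update_self _ _ _).symm
      · erw [Function.update_of_ne hpx, Function.update_of_ne hpx]
        exact (hcond p).2 hp

lemma state_after_iff {I : Impl Proc Var Val Op Ret} :
    ∀ {π : List (Ev Proc Var Val Op Ret)} {s : SIState I},
    LTSPath (SIStep I) (fun _ => none) π s → ∀ p : Proc,
    (s p).isSome = true ↔
      ∃ e : ObjEv Proc Op Ret,
        ((restrictObj π).filter (fun e => decide (e.proc = p))).getLast? = some e ∧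
          e.act.isInv := by
  intro π
  induction π using List.reverseRecOn with
  | nil =>
    intro s hs p
    have : s = fun _ => none := ltspath_nil_eq hs
    subst this
    simp [restrictObj]
  | append_singleton π' x ih =>
    intro s hs p
    obtain ⟨p0, a0⟩ := x
    obtain ⟨t, ht, hstep⟩ := ltspath_snoc hs
    obtain ⟨pq, tp, hproc, hsip, rfl⟩ := sistep_decomp hstep
    have hpq : p0 = pq := hproc
    subst hpq
    have hobjapp : restrictObj (π' ++ [Ev.mk p0 a0]) =
        restrictObj π' ++ restrictObj [Ev.mk (Var := Var) (Val := Val) p0 a0] := by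
      simp [restrictObj]
    generalize htx : t p0 = tq at hsip
    cases hsip with
    | invoke o =>
      by_cases hpx : p = p0
      · subst hpx
        erw [Function.update_self]
        rw [hobjapp]
        constructor
        · intro _
          refine ⟨⟨p, ObjAct.inv o⟩, ?_, trivial⟩
          rw [List.filter_append]
          simp [restrictObj, Ev.toObj, List.getLast?_append]
        · intro _; rfl
      · erw [Function.update_of_ne hpx, hobjapp, List.filter_append]
        have : (restrictObj [Ev.mk (Var := Var) (Val := Val) (Op := Op) (Ret := Ret)
            p0 (EvAct.inv o)]).filter (fun e => decide (e.proc = p)) = [] := by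
          simp [restrictObj, Ev.toObj]
          exact fun h => absurd h.symm hpx
        rw [this, List.append_nil]
        exact ih ht p
    | memStep a hstepm =>
      have hobj : restrictObj [Ev.mk (Var := Var) (Val := Val) (Op := Op) (Ret := Ret)
          p0 (EvAct.mem a)] = [] := by simp [restrictObj, Ev.toObj]
      rw [hobjapp, hobj, List.append_nil]
      by_cases hpx : p = p0
      · subst hpx
        erw [Function.update_self]
        rw [← ih ht, htx]
        simp
      · erw [Function.update_of_ne hpx]
        exact ih ht p
    | resStep u hstepr =>
      by_cases hpx : p = p0
      · subst hpx
        erw [Function.update_self]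
        rw [hobjapp]
        constructor
        · simp
        · rintro ⟨e, hl, hinv⟩
          rw [List.filter_append] at hl
          have hres : (restrictObj [Ev.mk (Var := Var) (Val := Val) (Op := Op) (Ret := Ret)
              p (EvAct.res u)]).filter (fun e => decide (e.proc = p)) =
              [⟨p, ObjAct.res u⟩] := by
            simp [restrictObj, Ev.toObj]
          rw [hres, List.getLast?_append] at hl
          simp at hl
          subst hl
          simp [ObjAct.isInv] at hinv
      · erw [Function.update_of_ne hpx, hobjapp, List.filter_append]
        have : (restrictObj [Ev.mk (Var := Var) (Val := Val) (Op := Op) (Ret := Ret)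
            p0 (EvAct.res u)]).filter (fun e => decide (e.proc = p)) = [] := by
          simp [restrictObj, Ev.toObj]
          exact fun h => absurd h.symm hpx
        rw [this, List.append_nil]
        exact ih ht p

lemma complete_allbot {I : Impl Proc Var Val Op Ret}
    {π : List (Ev Proc Var Val Op Ret)} {s : SIState I}
    (hp : LTSPath (SIStep I) (fun _ => none) π s) (hc : CompleteH (restrictObj π)) :
    s = fun _ => none := by
  funext p
  have hiff := state_after_iff hp p
  have hns : ¬ (s p).isSome = true := by
    rw [hiff]
    rintro ⟨e, hl, hinv⟩
    rcases hc.2 p with hemp | ⟨e', hl', hres⟩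
    · rw [hemp] at hl; simp at hl
    · rw [hl'] at hl
      injection hl with hl
      subst hl
      obtain ⟨pe, ae⟩ := e'
      cases ae with
      | inv o => simp [ObjAct.isRes] at hres
      | res u => simp [ObjAct.isInv] at hinv
  exact Option.not_isSome_iff_eq_none.mp hns

end MergeAux

/-- merging memory traces of an implementation yields merged
generated histories (both the weak "some" and strong "every" versions,
selected by `strong`). -/
theorem merge_lemma (Proc Var Val Op Ret : Type) [Fintype Proc] [DecidableEq Proc]
    (strong : Bool)
    (I : Impl Proc Var Val Op Ret) (M : MemModel Proc Var Val)
    (π0 π1 π2 : List (Ev Proc Var Val Op Ret))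
    (ha1 : procsEv π1 ∩ procsEv π2 = ∅)
    (ha2 : π0 ++ π1 ∈ ImplTraces I) (ha3 : π0 ++ π2 ∈ ImplTraces I)
    (ha4 : CompleteH (restrictObj π0))
    (hb : if strong then
            ∀ σ, Shuffle (restrictMem π1) (restrictMem π2) σ →
              restrictMem π0 ++ σ ∈ M.OTraces M.init
          else
            ∃ σ, Shuffle (restrictMem π1) (restrictMem π2) σ ∧
              restrictMem π0 ++ σ ∈ M.OTraces M.init) :
    if strong then
      ∀ h, Shuffle (restrictObj π1) (restrictObj π2) h → h ∈ GenHist π0 I M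
    else
      ∃ h, Shuffle (restrictObj π1) (restrictObj π2) h ∧ h ∈ GenHist π0 I M := by
  classical
  have hdisj : ∀ p, p ∈ procsEv π1 → p ∈ procsEv π2 → False := by
    intro p h1 h2
    have := Set.eq_empty_iff_forall_notMem.mp ha1 p
    exact this ⟨h1, h2⟩
  obtain ⟨sf1, hpath1⟩ := ha2
  obtain ⟨sf2, hpath2⟩ := ha3
  obtain ⟨sA, hp0A, hp1⟩ := ltspath_append_split hpath1
  obtain ⟨sB, hp0B, hp2⟩ := ltspath_append_split hpath2
  have hA : sA = fun _ => none := complete_allbot hp0A ha4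
  have hB : sB = fun _ => none := complete_allbot hp0B ha4
  subst hA
  rw [hB] at hp2
  have key : ∀ π : List (Ev Proc Var Val Op Ret), Shuffle π1 π2 π →
      restrictMem π0 ++ restrictMem π ∈ M.OTraces M.init →
      restrictObj π ∈ GenHist π0 I M := by
    intro π hsh hmem
    obtain ⟨t, ht, -⟩ := interleave hsh hdisj hp1 hp2
    refine ⟨π, ⟨t, ltspath_append hp0A ht⟩, rfl, ?_⟩
    have : restrictMem (π0 ++ π) = restrictMem π0 ++ restrictMem π := by
      simp [restrictMem]
    rw [this]
    exact hmem
  cases strong with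
  | false =>
    simp only [Bool.false_eq_true, if_false] at hb ⊢
    obtain ⟨σ, hshσ, hmem⟩ := hb
    obtain ⟨π, hshπ, hπm⟩ := shuffle_lift Ev.toMem hshσ rfl rfl
    refine ⟨restrictObj π, shuffle_filterMap Ev.toObj hshπ, ?_⟩
    have hπm' : restrictMem π = σ := hπm
    exact key π hshπ (by rw [hπm']; exact hmem)
  | true =>
    simp only [if_true] at hb ⊢
    intro h hshh
    obtain ⟨π, hshπ, hπo⟩ := shuffle_lift Ev.toObj hshh rfl rfl
    have hπo' : restrictObj π = h := hπo
    have := key π hshπ (hb (restrictMem π) (shuffle_filterMap Ev.toMem hshπ))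
    rwa [hπo'] at this


end WMM
end
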